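/- Let q be an odd prime power and let S be a clique of size q in the Paley graph P(q²). Then every vertex not in S has exactly (q−1)/2 neighbours in S. -/

import Mathlib

open Finset

lemma sum_qc_shift {F : Type*} [Field F] [Fintype F] [DecidableEq F]
    (hch : ringChar F ≠ 2) {s : F} (hs : s ≠ 0) :
    ∑ x : F, quadraticChar F (x * (x + s)) = -1 := by
  classical
  rw [← Finset.add_sum_erase _ _ (mem_univ (0:F))]
  rw [zero_mul, quadraticChar_zero, zero_add]
  have h1 : ∀ x ∈ univ.erase (0:F), quadraticChar F (x * (x + s))
      = quadraticChar F (1 + s * x⁻¹) := by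
    intro x hx
    have hx0 : x ≠ 0 := by simpa using (Finset.mem_erase.mp hx).1
    have : x * (x + s) = x ^ 2 * (1 + s * x⁻¹) := by
      field_simp
    rw [this, map_mul, quadraticChar_sq_one' hx0, one_mul]
  rw [Finset.sum_congr rfl h1]
  have h2 : ∑ x ∈ univ.erase (0:F), quadraticChar F (1 + s * x⁻¹)
      = ∑ y ∈ univ.erase (1:F), quadraticChar F y := by
    apply Finset.sum_nbij' (fun x => 1 + s * x⁻¹) (fun y => s * (y - 1)⁻¹)
    · intro x hx
      have hx0 : x ≠ 0 := by simpa using (Finset.mem_erase.mp hx).1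
      simp only [mem_erase, mem_univ, and_true]
      intro h
      apply hx0
      have : s * x⁻¹ = 0 := by linear_combination h
      rcases mul_eq_zero.mp this with h' | h'
      · exact absurd h' hs
      · exact inv_eq_zero.mp h'
    · intro y hy
      have hy1 : y ≠ 1 := by simpa using (Finset.mem_erase.mp hy).1
      simp only [mem_erase, mem_univ, and_true]
      exact mul_ne_zero hs (inv_ne_zero (sub_ne_zero.mpr hy1))
    · intro x hx
      have hx0 : x ≠ 0 := by simpa using (Finset.mem_erase.mp hx).1
      field_simp
      simp [hs]
    · intro y hy
      have hy1 : y ≠ 1 := by simpa using (Finset.mem_erase.mp hy).1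
      have : y - 1 ≠ 0 := sub_ne_zero.mpr hy1
      field_simp
      ring
    · intro x hx; rfl
  rw [h2]
  have h3 : ∑ y ∈ univ.erase (1:F), quadraticChar F y
      = (∑ y : F, quadraticChar F y) - quadraticChar F 1 := by
    rw [← Finset.add_sum_erase _ _ (mem_univ (1:F))]; ring
  rw [h3, quadraticChar_sum_zero hch, quadraticChar_one_iff_isSquare one_ne_zero |>.mpr IsSquare.one]
  ring

lemma deg_count {F : Type*} [Field F] [Fintype F] [DecidableEq F]
    (hch : ringChar F ≠ 2) (a : F) :
    2 * ((univ.filter (fun x => x ≠ a ∧ IsSquare (x - a))).card : ℤ)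
      = Fintype.card F - 1 := by
  classical
  have hsum : ∑ x : F, quadraticChar F (x - a) = 0 :=
    (Fintype.sum_equiv (Equiv.subRight a) _ _ (fun x => rfl)).trans (quadraticChar_sum_zero hch)
  have key : ∀ x : F, (1 + (quadraticChar F (x - a) : ℤ))
      = 2 * (if x ≠ a ∧ IsSquare (x - a) then (1:ℤ) else 0) + (if x = a then 1 else 0) := by
    intro x
    by_cases hxa : x = a
    · subst hxa; simp
    · have hne : x - a ≠ 0 := sub_ne_zero.mpr hxa
      by_cases hsq : IsSquare (x - a)
      · rw [(quadraticChar_one_iff_isSquare hne).mpr hsq]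
        simp [hxa, hsq]
      · rw [quadraticChar_neg_one_iff_not_isSquare.mpr hsq]
        simp [hxa, hsq]
  have := Finset.sum_congr rfl (fun x (_ : x ∈ (univ : Finset F)) => key x)
  push_cast at this
  rw [Finset.sum_add_distrib, Finset.sum_add_distrib, hsum] at this
  simp only [Finset.sum_const, Finset.card_univ, ← Finset.mul_sum, Finset.sum_boole] at this
  have h1 : (univ.filter (fun x => x = a)).card = 1 := by
    simp [Finset.filter_eq']
  rw [h1] at this
  simp only [nsmul_eq_mul, smul_eq_mul, mul_one, Nat.cast_one] at this
  push_cast at this ⊢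
  linarith

lemma common_count {F : Type*} [Field F] [Fintype F] [DecidableEq F]
    (hch : ringChar F ≠ 2) (hm1 : IsSquare (-1 : F)) {a b : F} (hab : a ≠ b)
    (hsqab : IsSquare (a - b)) :
    4 * ((univ.filter (fun x => (x ≠ a ∧ IsSquare (x - a)) ∧ (x ≠ b ∧ IsSquare (x - b)))).card : ℤ)
      = Fintype.card F - 5 := by
  classical
  have hsuma : ∑ x : F, quadraticChar F (x - a) = 0 :=
    (Fintype.sum_equiv (Equiv.subRight a) _ _ (fun x => rfl)).trans (quadraticChar_sum_zero hch)
  have hsumb : ∑ x : F, quadraticChar F (x - b) = 0 :=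
    (Fintype.sum_equiv (Equiv.subRight b) _ _ (fun x => rfl)).trans (quadraticChar_sum_zero hch)
  have hs : a - b ≠ 0 := sub_ne_zero.mpr hab
  have hsummul : ∑ x : F, quadraticChar F ((x - a) * (x - b)) = -1 := by
    refine (Fintype.sum_equiv (Equiv.subRight a) _
      (fun u => quadraticChar F (u * (u + (a - b)))) (fun x => ?_)).trans (sum_qc_shift hch hs)
    show quadraticChar F ((x - a) * (x - b)) = quadraticChar F ((x - a) * ((x - a) + (a - b)))
    congr 1; ring
  have hca : quadraticChar F (a - b) = 1 := (quadraticChar_one_iff_isSquare hs).mpr hsqab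
  have hcb : quadraticChar F (b - a) = 1 := by
    have h : (b - a) = (-1) * (a - b) := by ring
    have : IsSquare (b - a) := by rw [h]; exact hm1.mul hsqab
    exact (quadraticChar_one_iff_isSquare (sub_ne_zero.mpr hab.symm)).mpr this
  have key : ∀ x : F, (1 + (quadraticChar F (x - a) : ℤ)) * (1 + (quadraticChar F (x - b) : ℤ))
      = 4 * (if (x ≠ a ∧ IsSquare (x - a)) ∧ (x ≠ b ∧ IsSquare (x - b)) then (1:ℤ) else 0)
        + 2 * (if x = a then 1 else 0) + 2 * (if x = b then 1 else 0) := by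
    intro x
    by_cases hxa : x = a
    · subst hxa
      rw [sub_self, quadraticChar_zero, hca]
      simp [hab]
    · by_cases hxb : x = b
      · subst hxb
        rw [sub_self, quadraticChar_zero, hcb]
        simp [hxa]
      · have hnea : x - a ≠ 0 := sub_ne_zero.mpr hxa
        have hneb : x - b ≠ 0 := sub_ne_zero.mpr hxb
        by_cases hsa : IsSquare (x - a)
        · rw [(quadraticChar_one_iff_isSquare hnea).mpr hsa]
          by_cases hsb : IsSquare (x - b)
          · rw [(quadraticChar_one_iff_isSquare hneb).mpr hsb]
            simp [hxa, hxb, hsa, hsb]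
          · rw [quadraticChar_neg_one_iff_not_isSquare.mpr hsb]
            simp [hxa, hxb, hsa, hsb]
        · rw [quadraticChar_neg_one_iff_not_isSquare.mpr hsa]
          simp [hxa, hxb, hsa]
  have hexp : ∀ x : F, (1 + (quadraticChar F (x - a) : ℤ)) * (1 + (quadraticChar F (x - b) : ℤ))
      = 1 + (quadraticChar F (x - a) : ℤ) + (quadraticChar F (x - b) : ℤ)
        + (quadraticChar F ((x - a) * (x - b)) : ℤ) := by
    intro x; rw [map_mul]; push_cast; ring
  have hL : ∑ x : F, ((1 + (quadraticChar F (x - a) : ℤ)) * (1 + (quadraticChar F (x - b) : ℤ)))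
      = Fintype.card F - 1 := by
    rw [Finset.sum_congr rfl (fun x _ => hexp x)]
    rw [Finset.sum_add_distrib, Finset.sum_add_distrib, Finset.sum_add_distrib, hsuma, hsumb,
      hsummul]
    simp only [Finset.sum_const, Finset.card_univ, smul_eq_mul, mul_one]
    ring
  have hR := Finset.sum_congr rfl
    (fun x (_ : x ∈ (univ : Finset F)) => key x)
  rw [hL] at hR
  rw [Finset.sum_add_distrib, Finset.sum_add_distrib] at hR
  rw [← Finset.mul_sum, ← Finset.mul_sum, ← Finset.mul_sum, Finset.sum_boole,
    Finset.sum_boole, Finset.sum_boole] at hR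
  have h1 : (univ.filter (fun x => x = a)).card = 1 := by simp [Finset.filter_eq']
  have h2 : (univ.filter (fun x => x = b)).card = 1 := by simp [Finset.filter_eq']
  rw [h1, h2] at hR
  push_cast at hR ⊢
  linarith

/-- Let `q` be an odd prime power and `S` a clique of size `q` in the Paley graph
`P(q²)`. Then every vertex not in `S` has exactly `(q−1)/2` neighbours in `S`. -/
theorem paley_q_clique_regular (q : ℕ) (hq : IsPrimePow q) (hodd : Odd q)
    (F : Type*) [Field F] [Fintype F] [DecidableEq F] (hF : Fintype.card F = q ^ 2)
    (G : SimpleGraph F) [DecidableRel G.Adj]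
    (hG : ∀ x y : F, G.Adj x y ↔ x ≠ y ∧ IsSquare (x - y))
    (S : Finset F) (hS : G.IsNClique q S) :
    ∀ γ : F, γ ∉ S → (S.filter (fun y => G.Adj γ y)).card = (q - 1) / 2 := by
  classical
  obtain ⟨k, hk⟩ := hodd
  have hq3 : 3 ≤ q := by
    have h2 := hq.two_le
    rcases Nat.lt_or_ge q 3 with h | h
    · interval_cases q <;> omega
    · exact h
  have hq2mod : q ^ 2 % 4 = 1 := by
    have : q ^ 2 = 4 * (k * k + k) + 1 := by rw [hk]; ring
    omega
  have hch : ringChar F ≠ 2 := by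
    intro h
    have := FiniteField.even_card_of_char_two h
    rw [hF] at this
    omega
  have hm1 : IsSquare (-1 : F) := by
    rw [FiniteField.isSquare_neg_one_iff, hF, hq2mod]
    omega
  -- T is the complement of S
  set T : Finset F := Sᶜ with hT
  have hTcard : (T.card : ℤ) = (q : ℤ) ^ 2 - q := by
    rw [hT, Finset.card_compl, hF, hS.2]
    have : q ≤ q ^ 2 := by nlinarith
    push_cast [this]
    ring
  -- clique adjacency
  have hadj : ∀ a ∈ S, ∀ b ∈ S, a ≠ b → G.Adj a b := fun a ha b hb hne => hS.1 ha hb hne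
  -- out-degree count: for a ∈ S
  have houtdeg : ∀ a ∈ S, 2 * ((T.filter (fun γ => G.Adj γ a)).card : ℤ)
      = (q:ℤ)^2 - 1 - 2 * ((q:ℤ) - 1) := by
    intro a ha
    have hsplit : (univ.filter (fun γ => G.Adj γ a)).card
        = (S.filter (fun γ => G.Adj γ a)).card + (T.filter (fun γ => G.Adj γ a)).card := by
      rw [← Finset.card_union_of_disjoint
        (Finset.disjoint_filter_filter (disjoint_compl_right))]
      congr 1
      ext γ
      simp only [Finset.mem_union, Finset.mem_filter, Finset.mem_univ, true_and, hT,
        Finset.mem_compl]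
      tauto
    have hSfilt : (S.filter (fun γ => G.Adj γ a)) = S.erase a := by
      ext γ
      simp only [Finset.mem_filter, Finset.mem_erase]
      constructor
      · rintro ⟨hγ, hadjγ⟩
        exact ⟨((hG γ a).mp hadjγ).1, hγ⟩
      · rintro ⟨hne, hγ⟩
        exact ⟨hγ, hadj γ hγ a ha hne⟩
    have huniv : (univ.filter (fun γ => G.Adj γ a))
        = univ.filter (fun x => x ≠ a ∧ IsSquare (x - a)) := by
      ext γ; simp [hG]
    have hdeg := deg_count hch a
    rw [hF] at hdeg
    rw [hSfilt, Finset.card_erase_of_mem ha, hS.2] at hsplit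
    rw [huniv] at hsplit
    have : ((univ.filter (fun x => x ≠ a ∧ IsSquare (x - a))).card : ℤ)
        = (q - 1 : ℕ) + ((T.filter (fun γ => G.Adj γ a)).card : ℤ) := by
      exact_mod_cast congrArg (Nat.cast : ℕ → ℤ) hsplit
    push_cast [Nat.cast_sub (by omega : 1 ≤ q)] at this
    push_cast at hdeg
    linarith
  -- common-neighbour count outside S, for a ≠ b in S
  have hcommon : ∀ a ∈ S, ∀ b ∈ S, a ≠ b →
      4 * ((T.filter (fun γ => G.Adj γ a ∧ G.Adj γ b)).card : ℤ)
        = (q:ℤ)^2 - 5 - 4 * ((q:ℤ) - 2) := by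
    intro a ha b hb hab
    have hadjab := hadj a ha b hb hab
    have hsqab : IsSquare (a - b) := ((hG a b).mp hadjab).2
    have hsplit : (univ.filter (fun γ => G.Adj γ a ∧ G.Adj γ b)).card
        = (S.filter (fun γ => G.Adj γ a ∧ G.Adj γ b)).card
          + (T.filter (fun γ => G.Adj γ a ∧ G.Adj γ b)).card := by
      rw [← Finset.card_union_of_disjoint
        (Finset.disjoint_filter_filter (disjoint_compl_right))]
      congr 1
      ext γ
      simp only [Finset.mem_union, Finset.mem_filter, Finset.mem_univ, true_and, hT,
        Finset.mem_compl]
      tauto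
    have hSfilt : (S.filter (fun γ => G.Adj γ a ∧ G.Adj γ b)) = (S.erase a).erase b := by
      ext γ
      simp only [Finset.mem_filter, Finset.mem_erase]
      constructor
      · rintro ⟨hγ, hadja, hadjb⟩
        exact ⟨((hG γ b).mp hadjb).1, ((hG γ a).mp hadja).1, hγ⟩
      · rintro ⟨hneb, hnea, hγ⟩
        exact ⟨hγ, hadj γ hγ a ha hnea, hadj γ hγ b hb hneb⟩
    have huniv : (univ.filter (fun γ => G.Adj γ a ∧ G.Adj γ b))
        = univ.filter (fun x => (x ≠ a ∧ IsSquare (x - a)) ∧ (x ≠ b ∧ IsSquare (x - b))) := by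
      ext γ; simp [hG]
    have hcc := common_count hch hm1 hab hsqab
    rw [hF] at hcc
    have hbmem : b ∈ S.erase a := Finset.mem_erase.mpr ⟨hab.symm, hb⟩
    rw [hSfilt, Finset.card_erase_of_mem hbmem, Finset.card_erase_of_mem ha, hS.2] at hsplit
    rw [huniv] at hsplit
    have : ((univ.filter (fun x => (x ≠ a ∧ IsSquare (x - a)) ∧ (x ≠ b ∧ IsSquare (x - b)))).card : ℤ)
        = ((q - 1 - 1 : ℕ) : ℤ) + ((T.filter (fun γ => G.Adj γ a ∧ G.Adj γ b)).card : ℤ) := by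
      exact_mod_cast congrArg (Nat.cast : ℕ → ℤ) hsplit
    push_cast [Nat.cast_sub (by omega : 1 ≤ q), Nat.cast_sub (by omega : 1 ≤ q - 1),
      Nat.cast_sub (by omega : 2 ≤ q)] at this
    push_cast at hcc
    linarith
  -- D γ as a sum of indicators
  set D : F → ℤ := fun γ => ((S.filter (fun y => G.Adj γ y)).card : ℤ) with hD
  have hDsum : ∀ γ : F, D γ = ∑ a ∈ S, (if G.Adj γ a then (1:ℤ) else 0) := by
    intro γ
    rw [hD, Finset.sum_boole]
  -- first moment
  have hE : 2 * ∑ γ ∈ T, D γ = (q:ℤ) * ((q:ℤ)^2 - 1 - 2 * ((q:ℤ) - 1)) := by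
    have hswap : ∑ γ ∈ T, D γ = ∑ a ∈ S, ((T.filter (fun γ => G.Adj γ a)).card : ℤ) := by
      rw [Finset.sum_congr rfl (fun γ _ => hDsum γ), Finset.sum_comm]
      exact Finset.sum_congr rfl (fun a _ => Finset.sum_boole _ _)
    rw [hswap, Finset.mul_sum, Finset.sum_congr rfl (fun a ha => houtdeg a ha)]
    rw [Finset.sum_const, hS.2]
    push_cast
    ring
  -- second moment
  have hQ : 4 * ∑ γ ∈ T, (D γ)^2
      = 2 * (q:ℤ) * ((q:ℤ)^2 - 1 - 2 * ((q:ℤ) - 1))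
        + (q:ℤ) * ((q:ℤ) - 1) * ((q:ℤ)^2 - 5 - 4 * ((q:ℤ) - 2)) := by
    have hsq : ∀ γ ∈ T, (D γ)^2
        = ∑ a ∈ S, ∑ b ∈ S, (if G.Adj γ a ∧ G.Adj γ b then (1:ℤ) else 0) := by
      intro γ _
      rw [sq, hDsum γ, Finset.sum_mul_sum]
      refine Finset.sum_congr rfl (fun a _ => Finset.sum_congr rfl (fun b _ => ?_))
      by_cases h1 : G.Adj γ a <;> by_cases h2 : G.Adj γ b <;> simp [h1, h2]
    have hswap : ∑ γ ∈ T, (D γ)^2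
        = ∑ a ∈ S, ∑ b ∈ S, ((T.filter (fun γ => G.Adj γ a ∧ G.Adj γ b)).card : ℤ) := by
      rw [Finset.sum_congr rfl hsq, Finset.sum_comm]
      refine Finset.sum_congr rfl (fun a _ => ?_)
      rw [Finset.sum_comm]
      exact Finset.sum_congr rfl (fun b _ => Finset.sum_boole _ _)
    rw [hswap, Finset.mul_sum]
    have hinner : ∀ a ∈ S,
        4 * ∑ b ∈ S, ((T.filter (fun γ => G.Adj γ a ∧ G.Adj γ b)).card : ℤ)
        = 2 * ((q:ℤ)^2 - 1 - 2 * ((q:ℤ) - 1))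
          + ((q:ℤ) - 1) * ((q:ℤ)^2 - 5 - 4 * ((q:ℤ) - 2)) := by
      intro a ha
      rw [← Finset.add_sum_erase _ _ ha, mul_add, Finset.mul_sum]
      have hdiag : (T.filter (fun γ => G.Adj γ a ∧ G.Adj γ a)) = T.filter (fun γ => G.Adj γ a) := by
        ext γ; simp
      rw [hdiag]
      have h2 := houtdeg a ha
      have hrest : ∀ b ∈ S.erase a,
          4 * ((T.filter (fun γ => G.Adj γ a ∧ G.Adj γ b)).card : ℤ)
            = (q:ℤ)^2 - 5 - 4 * ((q:ℤ) - 2) := by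
        intro b hb
        obtain ⟨hba, hbS⟩ := Finset.mem_erase.mp hb
        exact hcommon a ha b hbS (Ne.symm hba)
      rw [Finset.sum_congr rfl hrest, Finset.sum_const, Finset.card_erase_of_mem ha, hS.2,
        nsmul_eq_mul]
      push_cast [Nat.cast_sub (by omega : 1 ≤ q)]
      linarith
    rw [Finset.sum_congr rfl hinner, Finset.sum_const, hS.2]
    push_cast
    ring
  -- variance is zero
  have hvar : ∑ γ ∈ T, (2 * D γ - ((q:ℤ) - 1))^2 = 0 := by
    have hexp : ∀ γ ∈ T, (2 * D γ - ((q:ℤ) - 1))^2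
        = 4 * (D γ)^2 - (4 * ((q:ℤ) - 1)) * D γ + ((q:ℤ) - 1)^2 := by
      intro γ _; ring
    rw [Finset.sum_congr rfl hexp, Finset.sum_add_distrib, Finset.sum_sub_distrib,
      ← Finset.mul_sum, ← Finset.mul_sum, Finset.sum_const, nsmul_eq_mul, hTcard]
    nlinarith [hE, hQ]
  intro γ hγ
  have hγT : γ ∈ T := Finset.mem_compl.mpr hγ
  have hzero : (2 * D γ - ((q:ℤ) - 1))^2 = 0 := by
    have := (Finset.sum_eq_zero_iff_of_nonneg (fun x _ => sq_nonneg _)).mp hvar γ hγT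
    exact this
  have h2d : 2 * D γ = (q:ℤ) - 1 := by
    have := pow_eq_zero_iff (n := 2) (by norm_num) |>.mp hzero
    linarith
  have h2d' : 2 * ((S.filter (fun y => G.Adj γ y)).card : ℤ) = (q : ℤ) - 1 := by
    simpa [hD] using h2d
  have : 2 * (S.filter (fun y => G.Adj γ y)).card = q - 1 := by omega
  omega
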